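/- Let w ∈ αΣ* ∩ Σ*‾α be a non-α-crossing (m,n)-word with m, n ≥ 2, with α-prefixes u₀ <_p ⋯ <_p u_{m−1}, and let 1 ≤ i < j < m. If u_i is a suffix of u_j, then H*_α(w‾u_j) ⊆ H*_α(w‾u_i); if u_i is not a suffix of u_j, then H*_α(w‾u_i) ∩ H*_α(w‾u_j) = ∅. -/

import Mathlib

open List

set_option linter.unusedSectionVars false

namespace Hairpin

variable {S : Type} [DecidableEq S]

/-- Antimorphic extension of an involution to words. -/
def comp (bar : S → S) (w : List S) : List S := (w.map bar).reverse

/-- Right hairpin completion w.r.t. primer `a`. -/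
def RH (bar : S → S) (a w z : List S) : Prop :=
  ∃ γ β : List S, w = γ ++ a ++ β ++ comp bar a ∧ z = w ++ comp bar γ

/-- Left hairpin completion w.r.t. primer `a`. -/
def LH (bar : S → S) (a w z : List S) : Prop :=
  ∃ γ β : List S, w = a ++ β ++ comp bar a ++ comp bar γ ∧ z = γ ++ w

/-- One hairpin completion step. -/
def HC (bar : S → S) (a w z : List S) : Prop := RH bar a w z ∨ LH bar a w z

/-- Iterated hairpin completion `H*_α(w)`. -/
def HCstar (bar : S → S) (a w : List S) : Set (List S) :=
  { z | Relation.ReflTransGen (HC bar a) w z }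

/-- `w` is non-`a`-crossing: every occurrence of `a` starts no later than
every occurrence of `comp bar a`. -/
def NonCrossing (bar : S → S) (a w : List S) : Prop :=
  ∀ i j : ℕ, a <+: w.drop i → comp bar a <+: w.drop j → i ≤ j

/-- The set of `a`-prefixes of `w`. -/
def Pa (a w : List S) : Set (List S) := { u | u ++ a <+: w }

/-- The set of `‾a`-suffixes of `w` (the elements are the words `‾v`). -/
def Sa (bar : S → S) (a w : List S) : Set (List S) :=
  { x | comp bar a ++ x <:+ w }

/-- The set of complements of `‾a`-suffixes of `w`, i.e. `‾(S_‾α(w))`. -/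
def barSa (bar : S → S) (a w : List S) : Set (List S) :=
  { v | comp bar a ++ comp bar v <:+ w }

/-- Kleene star of a set of words: all finite concatenations. -/
def star (X : Set (List S)) : Set (List S) :=
  { x | ∃ l : List (List S), (∀ y ∈ l, y ∈ X) ∧ x = l.flatten }

/-- `ind_α(x)`: the number of occurrences of `a` in `x ++ a` other than the
suffix occurrence, i.e. the number of positions `i < |x|` where `a` occurs. -/
def inda (a x : List S) : ℕ :=
  ((Finset.range x.length).filter (fun i => a <+: (x ++ a).drop i)).card

/-! ### Infrastructure -/

theorem comp_append (bar : S → S) (x y : List S) :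
    comp bar (x ++ y) = comp bar y ++ comp bar x := by simp [comp]

@[simp] theorem comp_length (bar : S → S) (x : List S) :
    (comp bar x).length = x.length := by simp [comp]

theorem comp_comp {bar : S → S} (hbar : Function.Involutive bar) (x : List S) :
    comp bar (comp bar x) = x := by
  simp [comp, List.map_reverse, List.map_map, hbar.comp_self]

@[simp] theorem comp_nil (bar : S → S) : comp bar ([] : List S) = [] := rfl

theorem getElem?_comp (bar : S → S) (x : List S) (k : ℕ) (hk : k < x.length) :
    (comp bar x)[k]? = (x[x.length - 1 - k]?).map bar := by
  rw [comp, List.getElem?_reverse (by simpa using hk)]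
  simp [List.getElem?_map]

theorem prefix_iff_get (x z : List S) :
    x <+: z ↔ ∀ k, k < x.length → z[k]? = x[k]? := by
  constructor
  · rintro ⟨t, rfl⟩ k hk
    rw [List.getElem?_append]
    simp [hk]
  · intro h
    rcases eq_or_ne x [] with rfl | hx
    · exact nil_prefix
    · have h1 : x.length - 1 < x.length := by
        have := List.length_pos_iff.mpr hx; omega
      have hlen : x.length ≤ z.length := by
        by_contra hc
        push_neg at hc
        have hz : z[x.length-1]? = none := List.getElem?_eq_none_iff.mpr (by omega)
        rw [h (x.length-1) h1] at hz
        rw [List.getElem?_eq_none_iff] at hz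
        omega
      have hxz : x = z.take x.length := by
        apply List.ext_getElem?
        intro i
        rw [List.getElem?_take]
        by_cases hi : i < x.length
        · simp [hi, h i hi]
        · simp [hi, List.getElem?_eq_none_iff.mpr (by omega : x.length ≤ i)]
      rw [hxz]
      exact List.take_prefix _ _

theorem occ_iff (pat x : List S) (i : ℕ) :
    pat <+: x.drop i ↔ ∀ k, k < pat.length → x[i+k]? = pat[k]? := by
  rw [prefix_iff_get]
  constructor
  · intro h k hk; rw [← List.getElem?_drop]; exact h k hk
  · intro h k hk; rw [List.getElem?_drop]; exact h k hk

theorem occ_le_length {pat x : List S} {i : ℕ} (hpat : pat ≠ []) (h : pat <+: x.drop i) :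
    i + pat.length ≤ x.length := by
  have h1 := h.length_le
  rw [List.length_drop] at h1
  have h2 : 0 < pat.length := List.length_pos_iff.mpr hpat
  omega

theorem occ_mono {pat z z' : List S} {i : ℕ} (h : pat <+: z.drop i) (hz : z <+: z') :
    pat <+: z'.drop i :=
  h.trans (hz.drop i)

theorem occ_of_occ_prefix {pat z z' : List S} {i : ℕ} (h : pat <+: z'.drop i)
    (hz : z <+: z') (hlen : i + pat.length ≤ z.length) :
    pat <+: z.drop i := by
  rw [occ_iff] at h ⊢
  intro k hk
  rw [← h k hk]
  exact ((prefix_iff_get z z').mp hz (i+k) (by omega)).symm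

theorem occ_comp {bar : S → S} {pat x : List S} {i : ℕ} (hpat : pat ≠ [])
    (h : pat <+: x.drop i) :
    comp bar pat <+: (comp bar x).drop (x.length - i - pat.length) := by
  obtain ⟨t, ht⟩ := h
  have hx : x = x.take i ++ (pat ++ t) := by
    conv_lhs => rw [← List.take_append_drop i x]
    rw [ht]
  have hlen := occ_le_length hpat ⟨t, ht⟩
  have hlt : t.length = x.length - i - pat.length := by
    have h2 : x.length = (x.take i ++ (pat ++ t)).length := by rw [← hx]
    simp at h2
    omega
  have key : comp bar x = comp bar t ++ (comp bar pat ++ comp bar (x.take i)) := by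
    conv_lhs => rw [hx]
    rw [comp_append, comp_append, List.append_assoc]
  rw [key, show x.length - i - pat.length = (comp bar t).length by simp [hlt],
    List.drop_left]
  exact ⟨_, rfl⟩

theorem pattern_mod (f : ℕ → Option S) (p N : ℕ) (hp : 0 < p)
    (hstep : ∀ x, p ≤ x → x < N → f x = f (x - p)) :
    ∀ x, x < N → f x = f (x % p) := by
  intro x
  induction x using Nat.strong_induction_on with
  | _ x ih =>
    intro hx
    by_cases hxp : x < p
    · rw [Nat.mod_eq_of_lt hxp]
    · push_neg at hxp
      rw [hstep x hxp hx, ih (x - p) (by omega) (by omega), Nat.mod_eq_sub_mod hxp]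

theorem suffix_occ {y z : List S} (h : y <:+ z) : y <+: z.drop (z.length - y.length) := by
  obtain ⟨t, rfl⟩ := h
  have hlen : (t ++ y).length - y.length = t.length := by simp
  rw [hlen, List.drop_left]

theorem occ_of_append {x y z : List S} (h : x ++ y <+: z) : y <+: z.drop x.length := by
  obtain ⟨t, ht⟩ := h
  rw [← ht, List.append_assoc, List.drop_left]
  exact List.prefix_append _ _

theorem occ_in_occ {pat y x : List S} {t s : ℕ} (h1 : pat <+: y.drop t)
    (h2 : y <+: x.drop s) : pat <+: x.drop (s+t) := by
  have h3 := h2.drop t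
  rw [List.drop_drop] at h3
  exact h1.trans h3

theorem drop_append_ge {x y : List S} {i : ℕ} (h : x.length ≤ i) :
    (x ++ y).drop i = y.drop (i - x.length) := by
  rw [List.drop_append]
  simp [List.drop_eq_nil_of_le h]

theorem comp_ne_nil {bar : S → S} {a : List S} (hane : a ≠ []) : comp bar a ≠ [] := by
  intro h
  have := congrArg List.length h
  simp at this
  exact hane this

/-! ### Non-crossing is preserved by hairpin steps -/

theorem nc_append {bar : S → S} (hbar : Function.Involutive bar) {a z γ : List S}
    (hane : a ≠ []) (hz : NonCrossing bar a z)
    (hγ : γ ++ a <+: z) (hsz : comp bar a <:+ z) :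
    NonCrossing bar a (z ++ comp bar γ) := by
  have hla : 0 < a.length := List.length_pos_iff.mpr hane
  have haγ : a <+: z.drop γ.length := occ_of_append hγ
  have hγlen : γ.length + a.length ≤ z.length := occ_le_length hane haγ
  have hγz : γ <+: z := (List.prefix_append γ a).trans hγ
  have hcaz : comp bar a <+: z.drop (z.length - a.length) := by
    have := suffix_occ hsz
    rwa [comp_length] at this
  have hcane : comp bar a ≠ [] := comp_ne_nil hane
  have hcla : (comp bar a).length = a.length := comp_length bar a
  have hclγ : (comp bar γ).length = γ.length := comp_length bar γ
  have claim1 : ∀ i, a <+: (z ++ comp bar γ).drop i →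
      a <+: z.drop i ∧ i + a.length ≤ z.length := by
    intro i hi
    have hilen : i + a.length ≤ z.length + γ.length := by
      have := occ_le_length hane hi
      simpa using this
    by_cases h1 : i + a.length ≤ z.length
    · exact ⟨occ_of_occ_prefix hi (List.prefix_append z _) h1, h1⟩
    exfalso
    push_neg at h1
    by_cases h2 : z.length ≤ i
    · -- the occurrence of `a` lies inside `comp γ`
      have hin : a <+: (comp bar γ).drop (i - z.length) := by
        rw [drop_append_ge h2] at hi
        exact hi
      have hocc := occ_comp (bar := bar) hane hin
      rw [comp_comp hbar, comp_length] at hocc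
      have hposγ := hz γ.length (γ.length - (i - z.length) - a.length) haγ
        (occ_mono hocc hγz)
      omega
    · -- the occurrence of `a` straddles the border
      push_neg at h2
      have hd1 : 1 ≤ i + a.length - z.length := by omega
      have hdla : i + a.length - z.length < a.length := by omega
      have hdγ : i + a.length - z.length ≤ γ.length := by omega
      set d := i + a.length - z.length with hd
      have hi' := (occ_iff _ _ _).mp hi
      have hstrad : ∀ k, k < a.length - d → a[k]? = (comp bar a)[d+k]? := by
        intro k hk
        have e1 : (z ++ comp bar γ)[i+k]? = a[k]? := hi' k (by omega)
        rw [List.getElem?_append_left (by omega : i + k < z.length)] at e1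
        have e2 := (occ_iff _ _ _).mp hcaz (d+k) (by omega)
        rw [show z.length - a.length + (d+k) = i + k from by omega] at e2
        rw [← e1, e2]
      have hcd : comp bar a <+: z.drop (γ.length - d) := by
        rw [occ_iff]
        intro k hk
        by_cases hkd : k < d
        · have e3 : (z ++ comp bar γ)[i + (a.length - d + (d-1-k))]?
              = a[a.length - d + (d-1-k)]? := hi' _ (by omega)
          rw [List.getElem?_append_right
            (by omega : z.length ≤ i + (a.length - d + (d-1-k)))] at e3
          rw [show i + (a.length - d + (d-1-k)) - z.length = d-1-k from by omega] at e3
          rw [show a.length - d + (d-1-k) = a.length - 1 - k from by omega] at e3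
          have e4 := getElem?_comp bar γ (d-1-k) (by omega)
          rw [e3] at e4
          have e5 := congrArg (Option.map bar) e4
          rw [Option.map_map, hbar.comp_self, Option.map_id] at e5
          simp only [id_eq] at e5
          rw [show γ.length - 1 - (d-1-k) = γ.length - d + k from by omega] at e5
          have e6 : z[γ.length - d + k]? = γ[γ.length - d + k]? :=
            (prefix_iff_get γ z).mp hγz _ (by omega)
          rw [e6, ← e5, ← getElem?_comp bar a k (by omega)]
        · push_neg at hkd
          have e7 := (occ_iff _ _ _).mp haγ (k - d) (by omega)
          rw [show γ.length + (k - d) = γ.length - d + k from by omega] at e7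
          rw [e7, hstrad (k-d) (by omega)]
          congr 1
          omega
      have := hz γ.length (γ.length - d) haγ hcd
      omega
  intro i j hia hjc
  obtain ⟨hiz, hilen⟩ := claim1 i hia
  by_cases hj : j + a.length ≤ z.length
  · exact hz i j hiz (occ_of_occ_prefix hjc (List.prefix_append z _) (by simpa using hj))
  · have := hz i (z.length - a.length) hiz hcaz
    omega

theorem nc_prepend {bar : S → S} (hbar : Function.Involutive bar) {a z γ : List S}
    (hane : a ≠ []) (hz : NonCrossing bar a z)
    (hp : a <+: z) (hsγ : comp bar a ++ comp bar γ <:+ z) :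
    NonCrossing bar a (γ ++ z) := by
  have hla : 0 < a.length := List.length_pos_iff.mpr hane
  have hcane : comp bar a ≠ [] := comp_ne_nil hane
  have hcla : (comp bar a).length = a.length := comp_length bar a
  have hclγ : (comp bar γ).length = γ.length := comp_length bar γ
  obtain ⟨z0, hz0⟩ := hsγ
  have hn0 : z0.length + a.length + γ.length = z.length := by
    have := congrArg List.length hz0
    simp at this
    omega
  have hca0 : comp bar a <+: z.drop z0.length := by
    have h : z.drop z0.length = comp bar a ++ comp bar γ := by
      rw [← hz0, List.drop_left]
    rw [h]
    exact List.prefix_append _ _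
  have hcγ0 : comp bar γ <+: z.drop (z0.length + a.length) := by
    have h : z.drop (z0.length + a.length) = comp bar γ := by
      rw [← hz0, show z0.length + a.length = (z0 ++ comp bar a).length from by simp,
        ← List.append_assoc, List.drop_left]
    rw [h]
  have hget_a : ∀ k, k < a.length → z[k]? = a[k]? := (prefix_iff_get a z).mp hp
  have claim : ∀ j, comp bar a <+: (γ ++ z).drop j → γ.length ≤ j := by
    intro j hj
    by_contra hjγ
    push_neg at hjγ
    have hjlen : j + a.length ≤ γ.length + z.length := by
      have := occ_le_length hcane hj
      simpa using this
    by_cases h2 : j + a.length ≤ γ.length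
    · have hin : comp bar a <+: γ.drop j :=
        occ_of_occ_prefix hj (List.prefix_append γ z) (by simpa using h2)
      have hocc := occ_comp (bar := bar) hcane hin
      rw [comp_comp hbar, comp_length] at hocc
      have hinz : a <+: z.drop (z0.length + a.length + (γ.length - j - a.length)) :=
        occ_in_occ hocc hcγ0
      have := hz (z0.length + a.length + (γ.length - j - a.length)) z0.length hinz hca0
      omega
    · push_neg at h2
      have hd1 : 1 ≤ γ.length - j := by omega
      have hdla : γ.length - j < a.length := by omega
      set d := γ.length - j with hd
      have hj' := (occ_iff _ _ _).mp hj
      have hstrad : ∀ k, k < a.length - d → z[k]? = (comp bar a)[d+k]? := by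
        intro k hk
        have e1 := hj' (d+k) (by omega)
        rw [List.getElem?_append_right (by omega : γ.length ≤ j + (d+k))] at e1
        rw [show j + (d+k) - γ.length = k from by omega] at e1
        exact e1
      have hocc : a <+: z.drop (z0.length + d) := by
        rw [occ_iff]
        intro k hk
        by_cases hkk : k < a.length - d
        · have e2 := (occ_iff _ _ _).mp hca0 (d+k) (by omega)
          rw [show z0.length + (d+k) = z0.length + d + k from by omega] at e2
          rw [e2, ← hstrad k hkk, hget_a k (by omega)]
        · push_neg at hkk
          have e3 := (occ_iff _ _ _).mp hcγ0 (d+k-a.length) (by omega)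
          rw [show z0.length + a.length + (d+k-a.length) = z0.length + d + k
            from by omega] at e3
          rw [e3]
          have e4 := getElem?_comp bar γ (d+k-a.length) (by omega)
          have hidx : γ.length - 1 - (d+k-a.length) = j + (a.length - 1 - k) := by omega
          have e5 := hj' (a.length-1-k) (by omega)
          rw [List.getElem?_append_left (by omega : j + (a.length-1-k) < γ.length)] at e5
          rw [hidx, e5] at e4
          have e6 := getElem?_comp bar a (a.length-1-k) (by omega)
          rw [e6, Option.map_map, hbar.comp_self, Option.map_id] at e4
          simp only [id_eq] at e4
          rw [show a.length - 1 - (a.length-1-k) = k from by omega] at e4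
          exact e4
      have := hz (z0.length + d) z0.length hocc hca0
      omega
  intro i j hia hjc
  have hjγ := claim j hjc
  have hjz : comp bar a <+: z.drop (j - γ.length) := by
    rw [drop_append_ge hjγ] at hjc
    exact hjc
  by_cases hiγ : γ.length ≤ i
  · have hiz : a <+: z.drop (i - γ.length) := by
      rw [drop_append_ge hiγ] at hia
      exact hia
    have := hz _ _ hiz hjz
    omega
  · omega

/-! ### A non-crossing word contains `w` at most once -/

theorem unique_occ {bar : S → S} {a w x : List S} (hane : a ≠ [])
    (hwnc : NonCrossing bar a w) (hp : a <+: w) (hs : comp bar a <:+ w)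
    (hxnc : NonCrossing bar a x) {p1 p2 : ℕ}
    (h1 : w <+: x.drop p1) (h2 : w <+: x.drop p2) (h12 : p1 < p2) : False := by
  have hla : 0 < a.length := List.length_pos_iff.mpr hane
  have hwne : w ≠ [] := by
    intro h
    rw [h] at hp
    exact hane (List.prefix_nil.mp hp)
  have hcane : comp bar a ≠ [] := comp_ne_nil hane
  have hcla : (comp bar a).length = a.length := comp_length bar a
  have hlaw : a.length ≤ w.length := hp.length_le
  have hx1 := occ_le_length hwne h1
  have h1' := (occ_iff _ _ _).mp h1
  have h2' := (occ_iff _ _ _).mp h2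
  have hap2 : a <+: x.drop p2 := hp.trans h2
  have hcaw : comp bar a <+: w.drop (w.length - a.length) := by
    have := suffix_occ hs
    rwa [comp_length] at this
  have hcap1 : comp bar a <+: x.drop (p1 + (w.length - a.length)) := occ_in_occ hcaw h1
  have hD := hxnc p2 (p1 + (w.length - a.length)) hap2 hcap1
  have hΔ1 : 1 ≤ p2 - p1 := by omega
  have hΔla : (p2 - p1) + a.length ≤ w.length := by omega
  set Δ := p2 - p1 with hΔ
  have period : ∀ k, k + Δ < w.length → w[k+Δ]? = w[k]? := by
    intro k hk
    rw [← h1' (k+Δ) hk, ← h2' k (by omega)]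
    congr 1
    omega
  have haΔ : a <+: w.drop Δ := by
    rw [occ_iff]
    intro k hk
    rw [show Δ + k = k + Δ from by omega, period k (by omega)]
    exact (prefix_iff_get a w).mp hp k hk
  have descent : ∀ r, comp bar a <+: w.drop r →
      ∃ r', r' < Δ ∧ comp bar a <+: w.drop r' := by
    intro r
    induction r using Nat.strong_induction_on with
    | _ r ih =>
      intro hr
      by_cases hrΔ : r < Δ
      · exact ⟨r, hrΔ, hr⟩
      · push_neg at hrΔ
        have hrlen := occ_le_length hcane hr
        rw [comp_length] at hrlen
        apply ih (r - Δ) (by omega)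
        rw [occ_iff] at hr ⊢
        intro k hk
        rw [comp_length] at hk
        have hper : w[(r-Δ+k) + Δ]? = w[r-Δ+k]? := period _ (by omega)
        rw [← hper, show r - Δ + k + Δ = r + k from by omega]
        exact hr k (by simpa using hk)
  obtain ⟨r', hr'Δ, hocc⟩ := descent (w.length - a.length) hcaw
  have := hwnc Δ r' haΔ hocc
  omega

/-! ### The key no-overlap lemma -/

theorem key_no_overlap {bar : S → S} (hbar : Function.Involutive bar)
    {a w U V : List S} (ha : a ≠ comp bar a)
    (hp : a <+: w) (hs : comp bar a <:+ w) (hnc : NonCrossing bar a w)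
    (hU : U ++ a <+: w) (hV : V ++ a <+: w)
    (hUne : U ≠ []) (hUV : U <:+ V) (hlen : U.length < V.length) :
    V.length + 2 * a.length ≤ w.length + 2 * U.length := by
  have hane : a ≠ [] := by
    rintro rfl
    exact ha rfl
  have hla : 0 < a.length := List.length_pos_iff.mpr hane
  have hposp : 0 < U.length := List.length_pos_iff.mpr hUne
  have hcla : (comp bar a).length = a.length := comp_length bar a
  have occ0 : ∀ k, k < a.length → w[k]? = a[k]? := (prefix_iff_get a w).mp hp
  have occp : a <+: w.drop U.length := occ_of_append hU
  have occP : a <+: w.drop V.length := occ_of_append hV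
  have hPla : V.length + a.length ≤ w.length := occ_le_length hane occP
  have occp' : ∀ k, k < a.length → w[U.length+k]? = a[k]? := (occ_iff _ _ _).mp occp
  have occP' : ∀ k, k < a.length → w[V.length+k]? = a[k]? := (occ_iff _ _ _).mp occP
  have hq : comp bar a <+: w.drop (w.length - a.length) := by
    have := suffix_occ hs
    rwa [comp_length] at this
  have occq : ∀ k, k < a.length → w[(w.length - a.length)+k]? = (comp bar a)[k]? := by
    have := (occ_iff _ _ _).mp hq
    intro k hk
    exact this k (by omega)
  have hPq : V.length ≤ w.length - a.length := hnc V.length (w.length - a.length) occP hq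
  by_contra hcon
  push_neg at hcon
  set la := a.length with hla_def
  set p := U.length with hp_def
  set P := V.length with hP_def
  set s := w.length - la - P with hs_def
  have hwlen : w.length = P + s + la := by omega
  have hbad : s + 2 * p < la := by omega
  -- the p-periodic structure
  have hUw : U <+: w := (List.prefix_append U a).trans hU
  have hVw : V <+: w := (List.prefix_append V a).trans hV
  have hUgets : ∀ k, k < p → w[k]? = U[k]? := (prefix_iff_get U w).mp hUw
  have hVgets : ∀ k, k < P → w[k]? = V[k]? := (prefix_iff_get V w).mp hVw
  obtain ⟨T, hT⟩ := hUV
  have hTlen : T.length = P - p := by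
    have := congrArg List.length hT
    simp at this
    omega
  have F5 : ∀ k, k < p → w[(P-p)+k]? = w[k]? := by
    intro k hk
    have h1 : w[(P-p)+k]? = V[(P-p)+k]? := hVgets _ (by omega)
    have h2 : V[(P-p)+k]? = U[k]? := by
      rw [← hT, List.getElem?_append_right (by omega), hTlen]
      congr 1
      omega
    rw [h1, h2, ← hUgets k hk]
  have G1 : ∀ x, p ≤ x → x < la → a[x]? = a[x-p]? := by
    intro x h1 h2
    rw [← occ0 x h2, ← occp' (x-p) (by omega)]
    congr 1
    omega
  have G2 : ∀ x, x < la → a[x]? = a[x % p]? :=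
    pattern_mod (fun x => a[x]?) p la hposp G1
  have G1c : ∀ y, p ≤ y → y < la → (comp bar a)[y]? = (comp bar a)[y-p]? := by
    intro y h1 h2
    have h3 := G1 (la-1-(y-p)) (by omega) (by omega)
    rw [show la-1-(y-p) - p = la-1-y from by omega] at h3
    rw [getElem?_comp bar a y (by omega), getElem?_comp bar a (y-p) (by omega), ← h3]
  have G5c : ∀ y, y < la → (comp bar a)[y]? = (comp bar a)[y % p]? :=
    pattern_mod _ p la hposp G1c
  have G4 : ∀ y, y < la - s → (comp bar a)[y]? = a[y+s]? := by
    intro y hy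
    rw [← occq y (by omega), show w.length - la + y = P + (s+y) from by omega,
      occP' (s+y) (by omega)]
    congr 1
    omega
  have G5 : ∀ y, y < la → (comp bar a)[y]? = a[(y+s) % p]? := by
    intro y hy
    have hyp : y % p < p := Nat.mod_lt _ hposp
    rw [G5c y hy, G4 (y % p) (by omega), G2 (y%p + s) (by omega)]
    congr 1
    exact (Nat.mod_modEq y p).add_right s
  have G6 : ∀ ξ, P - p ≤ ξ → ξ < w.length → w[ξ]? = a[(ξ - (P-p)) % p]? := by
    intro ξ h1 h2
    by_cases c1 : ξ < P
    · have hk : ξ - (P-p) < p := by omega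
      conv_lhs => rw [show ξ = (P-p) + (ξ - (P-p)) from by omega]
      rw [F5 _ hk, occ0 _ (by omega), Nat.mod_eq_of_lt hk]
    · push_neg at c1
      by_cases c2 : ξ < P + la
      · conv_lhs => rw [show ξ = P + (ξ - P) from by omega]
        rw [occP' (ξ-P) (by omega), G2 (ξ-P) (by omega)]
        congr 1
        rw [show ξ - (P - p) = (ξ - P) + p from by omega, Nat.add_mod_right]
      · push_neg at c2
        conv_lhs => rw [show ξ = (w.length - la) + (ξ - (P+s)) from by omega]
        rw [occq _ (by omega), G5 _ (by omega)]
        congr 1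
        rw [show ξ - (P-p) = (ξ - (P+s) + s) + p from by omega,
          Nat.add_mod_right]
  have hrp : s % p < p := Nat.mod_lt _ hposp
  have QB : comp bar a <+: w.drop ((P - p) + s % p) := by
    rw [occ_iff]
    intro k hk
    rw [comp_length] at hk
    rw [G6 ((P-p) + s % p + k) (by omega) (by omega), G5 k hk]
    congr 1
    rw [show (P-p) + s % p + k - (P-p) = s % p + k from by omega, Nat.add_comm k s]
    exact (Nat.mod_modEq s p).add_right k
  have hfin := hnc P ((P-p) + s % p) occP QB
  omega

/-! ### The invariant of iterated hairpin completion -/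

theorem hcstar_inv {bar : S → S} (hbar : Function.Involutive bar) {a w U x : List S}
    (hane : a ≠ []) (hnc : NonCrossing bar a w) (hU : U ++ a <+: w)
    (hs : comp bar a <:+ w)
    (hx : Relation.ReflTransGen (HC bar a) (w ++ comp bar U) x) :
    NonCrossing bar a x ∧ ∃ lam rho, x = lam ++ ((w ++ comp bar U) ++ rho) := by
  induction hx with
  | refl =>
    exact ⟨nc_append hbar hane hnc hU hs, [], [], by simp⟩
  | @tail b c hab hbc ih =>
    obtain ⟨hncb, lam, rho, hdec⟩ := ih
    rcases hbc with hRH | hLH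
    · obtain ⟨g, e, hb, hc⟩ := hRH
      subst hc
      have hga : g ++ a <+: b := ⟨e ++ comp bar a, by simp [hb, List.append_assoc]⟩
      have hsb : comp bar a <:+ b := ⟨g ++ a ++ e, by simp [hb, List.append_assoc]⟩
      refine ⟨nc_append hbar hane hncb hga hsb, lam, rho ++ comp bar g, ?_⟩
      rw [hdec]
      simp [List.append_assoc]
    · obtain ⟨g, e, hb, hc⟩ := hLH
      subst hc
      have hpa : a <+: b := ⟨e ++ comp bar a ++ comp bar g, by
        simp [hb, List.append_assoc]⟩
      have hsb : comp bar a ++ comp bar g <:+ b := ⟨a ++ e, by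
        simp [hb, List.append_assoc]⟩
      refine ⟨nc_prepend hbar hane hncb hpa hsb, g ++ lam, rho, ?_⟩
      rw [hdec]
      simp [List.append_assoc]

/-! ### The main theorem -/

theorem stmt18 (bar : S → S) (hbar : Function.Involutive bar)
    (a w : List S) (ha : a ≠ comp bar a)
    (hp : a <+: w) (hs : comp bar a <:+ w)
    (hnc : NonCrossing bar a w) (m : ℕ) (u : Fin m → List S)
    (huchain : ∀ i j : Fin m, i < j → u i <+: u j ∧ u i ≠ u j)
    (hPu : Pa a w = Set.range u)
    (n : ℕ) (v : Fin n → List S)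
    (hvchain : ∀ i j : Fin n, i < j → comp bar (v i) <:+ comp bar (v j) ∧ v i ≠ v j)
    (hSv : Sa bar a w = Set.range (fun i => comp bar (v i)))
    (hm : 2 ≤ m) (hn : 2 ≤ n)
    (i j : Fin m) (hi : 1 ≤ (i : ℕ)) (hij : i < j) :
    (u i <:+ u j →
      HCstar bar a (w ++ comp bar (u j)) ⊆ HCstar bar a (w ++ comp bar (u i))) ∧
    (¬ u i <:+ u j →
      HCstar bar a (w ++ comp bar (u i)) ∩ HCstar bar a (w ++ comp bar (u j)) = ∅) := by
  have hane : a ≠ [] := by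
    rintro rfl
    exact ha rfl
  have hla : 0 < a.length := List.length_pos_iff.mpr hane
  have hui : u i ++ a <+: w := by
    have hmem : u i ∈ Pa a w := by
      rw [hPu]
      exact Set.mem_range_self i
    simpa [Pa] using hmem
  have huj : u j ++ a <+: w := by
    have hmem : u j ∈ Pa a w := by
      rw [hPu]
      exact Set.mem_range_self j
    simpa [Pa] using hmem
  have hchain := huchain i j hij
  have hlen_ij : (u i).length < (u j).length := by
    rcases lt_or_eq_of_le hchain.1.length_le with h | h
    · exact h
    · exact absurd (hchain.1.eq_of_length h) hchain.2
  have hi0 : (⟨0, by omega⟩ : Fin m) < i := by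
    rw [Fin.lt_def]
    exact hi
  have hchain0 := huchain ⟨0, by omega⟩ i hi0
  have hui_len : 0 < (u i).length := by
    rcases lt_or_eq_of_le hchain0.1.length_le with h | h
    · omega
    · exact absurd (hchain0.1.eq_of_length h) hchain0.2
  have hui_ne : u i ≠ [] := by
    intro h
    rw [h] at hui_len
    simp at hui_len
  constructor
  · -- the suffix case: a single right hairpin completion step
    intro hsuf
    obtain ⟨T, hT⟩ := hsuf
    have haUa : a <+: u i ++ a :=
      List.prefix_of_prefix_length_le hp hui (by simp)
    obtain ⟨e, he⟩ := haUa
    have hTa : T ++ a <+: w := by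
      have h1 : T ++ a <+: T ++ (a ++ e) := ⟨e, by simp [List.append_assoc]⟩
      have h2 : T ++ (a ++ e) = u j ++ a := by
        rw [he, ← List.append_assoc, hT]
      rw [h2] at h1
      exact h1.trans huj
    have hkey := key_no_overlap hbar ha hp hs hnc hui huj hui_ne ⟨T, hT⟩ hlen_ij
    obtain ⟨w0, hw0⟩ := hs
    have hz0 : w ++ comp bar (u i) = (w0 ++ comp bar e) ++ comp bar a := by
      have h3 : comp bar a ++ comp bar (u i) = comp bar e ++ comp bar a := by
        rw [← comp_append, ← comp_append, he]
      calc w ++ comp bar (u i) = w0 ++ (comp bar a ++ comp bar (u i)) := by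
            rw [← hw0, List.append_assoc]
        _ = w0 ++ (comp bar e ++ comp bar a) := by rw [h3]
        _ = (w0 ++ comp bar e) ++ comp bar a := by rw [List.append_assoc]
    have hTa_z : T ++ a <+: w ++ comp bar (u i) := hTa.trans (List.prefix_append _ _)
    have hTl : T.length + (u i).length = (u j).length := by
      have := congrArg List.length hT
      simpa using this
    have hel : a.length + e.length = (u i).length + a.length := by
      have := congrArg List.length he
      simpa using this
    have hw0l : w0.length + a.length = w.length := by
      have := congrArg List.length hw0
      simpa using this
    have hlenY : (T ++ a).length ≤ (w0 ++ comp bar e).length := by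
      simp only [List.length_append, comp_length]
      omega
    have hY : (w0 ++ comp bar e) <+: w ++ comp bar (u i) := by
      rw [hz0]
      exact List.prefix_append _ _
    obtain ⟨b, hb⟩ := List.prefix_of_prefix_length_le hTa_z hY hlenY
    have hRH : RH bar a (w ++ comp bar (u i)) (w ++ comp bar (u j)) := by
      refine ⟨T, b, ?_, ?_⟩
      · rw [hz0, ← hb]
      · rw [← hT, comp_append]
        simp [List.append_assoc]
    intro z hz
    simp only [HCstar, Set.mem_setOf_eq] at hz ⊢
    exact Relation.ReflTransGen.trans
      (Relation.ReflTransGen.single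
        (show HC bar a (w ++ comp bar (u i)) (w ++ comp bar (u j)) from Or.inl hRH)) hz
  · -- the non-suffix case: disjointness
    intro hnsuf
    rw [Set.eq_empty_iff_forall_notMem]
    rintro z ⟨hz1, hz2⟩
    simp only [HCstar, Set.mem_setOf_eq] at hz1 hz2
    obtain ⟨hnc1, lam1, rho1, hdec1⟩ := hcstar_inv hbar hane hnc hui hs hz1
    obtain ⟨hnc2, lam2, rho2, hdec2⟩ := hcstar_inv hbar hane hnc huj hs hz2
    have ho1 : w <+: z.drop lam1.length := by
      have h1 : lam1 ++ ((w ++ comp bar (u i)) ++ rho1) <+: z := ⟨[], by rw [hdec1]; simp⟩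
      have h2 := occ_of_append h1
      exact ((List.prefix_append w (comp bar (u i))).trans
        (List.prefix_append _ rho1)).trans h2
    have ho2 : w <+: z.drop lam2.length := by
      have h1 : lam2 ++ ((w ++ comp bar (u j)) ++ rho2) <+: z := ⟨[], by rw [hdec2]; simp⟩
      have h2 := occ_of_append h1
      exact ((List.prefix_append w (comp bar (u j))).trans
        (List.prefix_append _ rho2)).trans h2
    have heq : lam1.length = lam2.length := by
      rcases lt_trichotomy lam1.length lam2.length with hlt | heq | hgt
      · exact absurd (unique_occ hane hnc hp hs hnc1 ho1 ho2 hlt) not_false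
      · exact heq
      · exact absurd (unique_occ hane hnc hp hs hnc1 ho2 ho1 hgt) not_false
    have hlam : lam1 = lam2 := by
      have p1 : lam1 <+: z := ⟨_, hdec1.symm⟩
      have p2 : lam2 <+: z := ⟨_, hdec2.symm⟩
      exact (List.prefix_of_prefix_length_le p1 p2 (by omega)).eq_of_length heq
    have e0 : lam1 ++ ((w ++ comp bar (u i)) ++ rho1)
        = lam1 ++ ((w ++ comp bar (u j)) ++ rho2) := by
      rw [← hdec1]
      rw [hlam, ← hdec2]
    have e1 : (w ++ comp bar (u i)) ++ rho1 = (w ++ comp bar (u j)) ++ rho2 :=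
      List.append_cancel_left e0
    rw [List.append_assoc, List.append_assoc] at e1
    have e2 : comp bar (u i) ++ rho1 = comp bar (u j) ++ rho2 :=
      List.append_cancel_left e1
    have hpref : comp bar (u i) <+: comp bar (u j) := by
      apply List.prefix_of_prefix_length_le ⟨rho1, e2⟩ (List.prefix_append _ _)
      simp [hlen_ij.le]
    obtain ⟨d, hd⟩ := hpref
    apply hnsuf
    refine ⟨comp bar d, ?_⟩
    have := congrArg (comp bar) hd
    rw [comp_append, comp_comp hbar, comp_comp hbar] at this
    exact this

end Hairpin
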